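/- Let G be a finite abelian group (written additively). Let V = { f : G → ℝ : ∑_{g∈G} f(g) = 1 and f(g) = f(−g) for all g }, equipped with the subspace topology from ℝ^G, and let E ⊆ V be the set of all f ∈ V satisfying: (1) for every nontrivial additive character χ : G → ℂ, ∑_{h∈G} Re(χ(h))·f(h) > 0; and (2) for every nonzero g ∈ G, ∏_{χ : Re(χ(g)) > 0} ( ∑_{h} Re(χ(h))·f(h) )^{Re(χ(g))} ≥ ∏_{χ : Re(χ(g)) < 0} ( ∑_{h} Re(χ(h))·f(h) )^{−Re(χ(g))}. Then for every f ∈ E, f lies in the frontier of E relative to V if and only if there exists a nonzero g ∈ G for which the inequality in (2) holds with equality. -/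

import Mathlib

open Finset Filter Topology
open scoped Classical

noncomputable section EmbAux

namespace EmbAux

variable {G : Type*} [AddCommGroup G] [Fintype G]

/-- The linear functional `f ↦ ∑ h, Re (χ h) * f h`. -/
def S (χ : AddChar G ℂ) (f : G → ℝ) : ℝ := ∑ h, (χ h).re * f h

lemma re_neg (χ : AddChar G ℂ) (h : G) : (χ (-h)).re = (χ h).re := by
  rw [AddChar.map_neg_eq_inv, AddChar.inv_apply_eq_conj, Complex.conj_re]

lemma inv_re (χ : AddChar G ℂ) (h : G) : (χ⁻¹ h).re = (χ h).re := by
  rw [AddChar.inv_apply, re_neg]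

lemma S_add_smul (χ : AddChar G ℂ) (f v : G → ℝ) (t : ℝ) :
    S χ (f + t • v) = S χ f + t * S χ v := by
  simp only [S, Pi.add_apply, Pi.smul_apply, smul_eq_mul, mul_add, Finset.sum_add_distrib,
    Finset.mul_sum]
  congr 1
  exact Finset.sum_congr rfl fun h _ => by ring

lemma four_S_re (χ ψ : AddChar G ℂ) :
    (4 : ℝ) * S χ (fun h => (ψ h).re) =
      (Fintype.card G : ℝ) *
        (2 * (if χ = ψ then 1 else 0) + 2 * (if χ = ψ⁻¹ then 1 else 0)) := by
  have conj1 : ∀ (φ : AddChar G ℂ) (h : G), φ h + φ (-h) = ((2 * (φ h).re : ℝ) : ℂ) := by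
    intro φ h
    rw [AddChar.map_neg_eq_inv, AddChar.inv_apply_eq_conj, Complex.add_conj]
    try push_cast
    try ring
  have hT1 : ∑ h, (χ h + χ (-h)) * (ψ h + ψ (-h))
      = ((4 * S χ (fun h => (ψ h).re) : ℝ) : ℂ) := by
    have hterm : ∀ h : G, (χ h + χ (-h)) * (ψ h + ψ (-h))
        = ((4 * ((χ h).re * (ψ h).re) : ℝ) : ℂ) := by
      intro h; rw [conj1, conj1]; push_cast; ring
    rw [Finset.sum_congr rfl fun h _ => hterm h, ← Complex.ofReal_sum]
    congr 1
    rw [S, Finset.mul_sum]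
    try exact Finset.sum_congr rfl fun h _ => by ring
  have hT2 : ∑ h, (χ h + χ (-h)) * (ψ h + ψ (-h))
      = (Fintype.card G : ℂ) *
        (2 * (if χ = ψ then 1 else 0) + 2 * (if χ = ψ⁻¹ then 1 else 0)) := by
    have expand : ∀ h : G, (χ h + χ (-h)) * (ψ h + ψ (-h)) =
        (χ * ψ) h + (χ * ψ⁻¹) h + (χ⁻¹ * ψ) h + (χ⁻¹ * ψ⁻¹) h := by
      intro h
      simp only [AddChar.mul_apply, AddChar.inv_apply]
      ring
    rw [Finset.sum_congr rfl fun h _ => expand h]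
    rw [Finset.sum_add_distrib, Finset.sum_add_distrib, Finset.sum_add_distrib]
    rw [AddChar.sum_eq_ite, AddChar.sum_eq_ite, AddChar.sum_eq_ite, AddChar.sum_eq_ite]
    have e1 : (χ * ψ = 0) ↔ χ = ψ⁻¹ := by
      rw [← AddChar.one_eq_zero, mul_eq_one_iff_eq_inv]
    have e2 : (χ * ψ⁻¹ = 0) ↔ χ = ψ := by
      rw [← AddChar.one_eq_zero, mul_inv_eq_one]
    have e3 : (χ⁻¹ * ψ = 0) ↔ χ = ψ := by
      rw [← AddChar.one_eq_zero, inv_mul_eq_one]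
    have e4 : (χ⁻¹ * ψ⁻¹ = 0) ↔ χ = ψ⁻¹ := by
      rw [← AddChar.one_eq_zero, ← mul_inv_rev, inv_eq_one, mul_comm,
        mul_eq_one_iff_eq_inv]
    simp only [e1, e2, e3, e4]
    split_ifs <;> ring
  have hcast : (Fintype.card G : ℂ) *
        (2 * (if χ = ψ then 1 else 0) + 2 * (if χ = ψ⁻¹ then 1 else 0))
      = (((Fintype.card G : ℝ) *
        (2 * (if χ = ψ then 1 else 0) + 2 * (if χ = ψ⁻¹ then 1 else 0)) : ℝ) : ℂ) := by
    split_ifs <;> push_cast <;> ring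
  exact Complex.ofReal_inj.1 (hT1.symm.trans (hT2.trans hcast))

lemma S_re_eq_zero (χ ψ : AddChar G ℂ) (h1 : χ ≠ ψ) (h2 : χ ≠ ψ⁻¹) :
    S χ (fun h => (ψ h).re) = 0 := by
  have := four_S_re χ ψ
  rw [if_neg h1, if_neg h2] at this
  simpa using by linarith

lemma S_re_nonneg (χ ψ : AddChar G ℂ) : 0 ≤ S χ (fun h => (ψ h).re) := by
  have := four_S_re χ ψ
  have hc : (0 : ℝ) ≤ Fintype.card G := by positivity
  split_ifs at this <;> nlinarith

lemma S_re_self_pos (ψ : AddChar G ℂ) : 0 < S ψ (fun h => (ψ h).re) := by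
  have := four_S_re ψ ψ
  rw [if_pos rfl] at this
  have hc : (0 : ℝ) < Fintype.card G := by
    exact_mod_cast Fintype.card_pos
  split_ifs at this <;> nlinarith

lemma exists_neg_re (g : G) (hg : g ≠ 0) : ∃ χ : AddChar G ℂ, (χ g).re < 0 := by
  by_contra hcon
  push_neg at hcon
  have h0 : ∑ χ : AddChar G ℂ, χ g = 0 := AddChar.sum_apply_eq_zero_iff_ne_zero.2 hg
  have h0' : ∑ χ : AddChar G ℂ, (χ g).re = 0 := by
    rw [← Complex.re_sum, h0, Complex.zero_re]
  have h1 : ((1 : AddChar G ℂ) g).re = 1 := by simp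
  have hle := Finset.single_le_sum (f := fun χ : AddChar G ℂ => (χ g).re)
    (fun χ _ => hcon χ) (Finset.mem_univ 1)
  have hle2 : (1 : ℝ) ≤ 0 := by simpa [h0'] using hle
  linarith

/-- The affine space of symmetric vectors of coordinate sum one. -/
def Vs (G : Type*) [AddCommGroup G] [Fintype G] : Set (G → ℝ) :=
  {f | (∑ g, f g = 1) ∧ ∀ g, f g = f (-g)}

/-- The set of embeddable mutation matrices. -/
def Es (G : Type*) [AddCommGroup G] [Fintype G] : Set (Vs G) :=
  {f : Vs G |
    (∀ χ : AddChar G ℂ, χ ≠ 1 → 0 < ∑ h, (χ h).re * (f : G → ℝ) h) ∧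
    ∀ g : G, g ≠ 0 →
      ∏ᶠ (χ : AddChar G ℂ) (_ : (χ g).re < 0),
          (∑ h, (χ h).re * (f : G → ℝ) h) ^ (-(χ g).re) ≤
      ∏ᶠ (χ : AddChar G ℂ) (_ : 0 < (χ g).re),
          (∑ h, (χ h).re * (f : G → ℝ) h) ^ ((χ g).re)}

def As (g : G) : Finset (AddChar G ℂ) := univ.filter fun χ => 0 < (χ g).re

def Bs (g : G) : Finset (AddChar G ℂ) := univ.filter fun χ => (χ g).re < 0

def RHS (f : G → ℝ) (g : G) : ℝ := ∏ χ ∈ As g, (S χ f) ^ ((χ g).re)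

def LHS (f : G → ℝ) (g : G) : ℝ := ∏ χ ∈ Bs g, (S χ f) ^ (-(χ g).re)

lemma finRHS (f : G → ℝ) (g : G) :
    ∏ᶠ (χ : AddChar G ℂ) (_ : 0 < (χ g).re), (∑ h, (χ h).re * f h) ^ ((χ g).re)
      = RHS f g :=
  finprod_cond_eq_prod_of_cond_iff _ (fun {x} => by simp [As])

lemma finLHS (f : G → ℝ) (g : G) :
    ∏ᶠ (χ : AddChar G ℂ) (_ : (χ g).re < 0), (∑ h, (χ h).re * f h) ^ (-(χ g).re)
      = LHS f g :=
  finprod_cond_eq_prod_of_cond_iff _ (fun {x} => by simp [Bs])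

lemma continuous_S (W : Set (G → ℝ)) (χ : AddChar G ℂ) :
    Continuous fun p : W => S χ (p : G → ℝ) := by
  apply continuous_finset_sum
  intro h _
  exact continuous_const.mul ((continuous_apply h).comp continuous_subtype_val)

lemma continuous_RHS (W : Set (G → ℝ)) (g : G) :
    Continuous fun p : W => RHS (p : G → ℝ) g := by
  apply continuous_finset_prod
  intro χ hχ
  have hc : (0 : ℝ) ≤ (χ g).re := le_of_lt (Finset.mem_filter.1 hχ).2
  exact (Real.continuous_rpow_const hc).comp (continuous_S W χ)

lemma continuous_LHS (W : Set (G → ℝ)) (g : G) :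
    Continuous fun p : W => LHS (p : G → ℝ) g := by
  apply continuous_finset_prod
  intro χ hχ
  have hc : (0 : ℝ) ≤ -(χ g).re := by
    have := (Finset.mem_filter.1 hχ).2; linarith
  exact (Real.continuous_rpow_const hc).comp (continuous_S W χ)

theorem aux (G : Type*) [AddCommGroup G] [Fintype G] :
    ∀ f ∈ Es G, (f ∈ frontier (Es G) ↔
      ∃ g : G, g ≠ 0 ∧
        ∏ᶠ (χ : AddChar G ℂ) (_ : 0 < (χ g).re),
            (∑ h, (χ h).re * (f : G → ℝ) h) ^ ((χ g).re) =
        ∏ᶠ (χ : AddChar G ℂ) (_ : (χ g).re < 0),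
            (∑ h, (χ h).re * (f : G → ℝ) h) ^ (-(χ g).re)) := by
  intro f hf
  obtain ⟨hf1, hf2⟩ := hf
  -- all the linear functionals are positive at `f`
  have hSpos : ∀ χ : AddChar G ℂ, 0 < S χ (f : G → ℝ) := by
    intro χ
    by_cases hχ : χ = 1
    · subst hχ
      have h1 : S (1 : AddChar G ℂ) (f : G → ℝ) = 1 := by
        have := f.2.1
        simp only [S, AddChar.one_apply, Complex.one_re, one_mul]
        exact this
      rw [h1]; norm_num
    · exact hf1 χ hχ
  have hf2' : ∀ g : G, g ≠ 0 → LHS (f : G → ℝ) g ≤ RHS (f : G → ℝ) g := by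
    intro g hg
    have := hf2 g hg
    rwa [finRHS, finLHS] at this
  constructor
  · -- frontier → some equality
    intro hfr
    by_contra hcon
    push_neg at hcon
    -- strict inequalities everywhere
    have hstrict : ∀ g : G, g ≠ 0 → LHS (f : G → ℝ) g < RHS (f : G → ℝ) g := by
      intro g hg
      refine lt_of_le_of_ne (hf2' g hg) ?_
      intro h
      exact (hcon g hg) (by rw [finRHS, finLHS]; exact h.symm)
    -- build an open neighbourhood of `f` inside `Es G`
    set U : Set (Vs G) :=
      {p : Vs G | ∀ χ : AddChar G ℂ, χ ≠ 1 → 0 < S χ (p : G → ℝ)} ∩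
      {p : Vs G | ∀ g : G, g ≠ 0 → LHS (p : G → ℝ) g < RHS (p : G → ℝ) g} with hU
    have hUopen : IsOpen U := by
      apply IsOpen.inter
      · have : {p : Vs G | ∀ χ : AddChar G ℂ, χ ≠ 1 → 0 < S χ (p : G → ℝ)}
            = ⋂ χ : AddChar G ℂ, {p : Vs G | χ ≠ 1 → 0 < S χ (p : G → ℝ)} := by
          ext p; simp [Set.mem_iInter]
        rw [this]
        refine isOpen_iInter_of_finite fun χ => ?_
        by_cases hχ : χ = 1
        · have : {p : Vs G | χ ≠ 1 → 0 < S χ (p : G → ℝ)} = Set.univ := by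
            ext p; simp [hχ]
          rw [this]; exact isOpen_univ
        · have : {p : Vs G | χ ≠ 1 → 0 < S χ (p : G → ℝ)}
              = {p : Vs G | 0 < S χ (p : G → ℝ)} := by
            ext p; simp [hχ]
          rw [this]
          exact isOpen_lt continuous_const (continuous_S _ χ)
      · have : {p : Vs G | ∀ g : G, g ≠ 0 → LHS (p : G → ℝ) g < RHS (p : G → ℝ) g}
            = ⋂ g : G, {p : Vs G | g ≠ 0 → LHS (p : G → ℝ) g < RHS (p : G → ℝ) g} := by
          ext p; simp [Set.mem_iInter]
        rw [this]
        refine isOpen_iInter_of_finite fun g => ?_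
        by_cases hg : g = 0
        · have : {p : Vs G | g ≠ 0 → LHS (p : G → ℝ) g < RHS (p : G → ℝ) g}
              = Set.univ := by
            ext p; simp [hg]
          rw [this]; exact isOpen_univ
        · have : {p : Vs G | g ≠ 0 → LHS (p : G → ℝ) g < RHS (p : G → ℝ) g}
              = {p : Vs G | LHS (p : G → ℝ) g < RHS (p : G → ℝ) g} := by
            ext p; simp [hg]
          rw [this]
          exact isOpen_lt (continuous_LHS _ g) (continuous_RHS _ g)
    have hfU : f ∈ U := ⟨fun χ hχ => hSpos χ, hstrict⟩
    have hUE : U ⊆ Es G := by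
      rintro p ⟨hp1, hp2⟩
      refine ⟨fun χ hχ => hp1 χ hχ, fun g hg => ?_⟩
      rw [finRHS, finLHS]
      exact le_of_lt (hp2 g hg)
    have hint : f ∈ interior (Es G) := mem_interior.2 ⟨U, hUE, hUopen, hfU⟩
    rw [frontier, Set.mem_diff] at hfr
    exact hfr.2 hint
  · -- some equality → frontier
    rintro ⟨g, hg, heq⟩
    rw [finRHS, finLHS] at heq
    obtain ⟨χ1, hχ1⟩ := exists_neg_re g hg
    set v : G → ℝ := fun h => (χ1 h).re with hv
    have hχ1ne : χ1 ≠ 1 := by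
      intro h; rw [h] at hχ1; norm_num at hχ1
    have hvsum : ∑ h, v h = 0 := by
      have hz : ∑ x, χ1 x = 0 :=
        AddChar.sum_eq_zero_iff_ne_zero.2 (by rwa [← AddChar.one_eq_zero])
      have : ∑ h, v h = (∑ x, χ1 x).re := by
        rw [Complex.re_sum]
      rw [this, hz, Complex.zero_re]
    have hvsymm : ∀ h : G, v h = v (-h) := fun h => (re_neg χ1 h).symm
    have hmem : ∀ t : ℝ, ((f : G → ℝ) + t • v) ∈ Vs G := by
      intro t
      constructor
      · have h1 : ∑ h, ((f : G → ℝ) h + t * v h)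
            = (∑ h, (f : G → ℝ) h) + t * ∑ h, v h := by
          rw [Finset.sum_add_distrib, Finset.mul_sum]
        have h2 : ∑ h, ((f : G → ℝ) + t • v) h = ∑ h, ((f : G → ℝ) h + t * v h) := by
          apply Finset.sum_congr rfl; intro h _; simp
        rw [h2, h1, f.2.1, hvsum, mul_zero, add_zero]
      · intro h
        have := f.2.2 h
        simp only [Pi.add_apply, Pi.smul_apply, smul_eq_mul]
        rw [← this, ← hvsymm h]
    -- the perturbed point is not in `Es G`
    have hout : ∀ t : ℝ, 0 < t →
        (⟨(f : G → ℝ) + t • v, hmem t⟩ : Vs G) ∉ Es G := by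
      intro t ht hmemE
      obtain ⟨-, h2⟩ := hmemE
      have h2g := h2 g hg
      rw [finRHS, finLHS] at h2g
      -- the positive-side product is unchanged
      have hA : RHS ((f : G → ℝ) + t • v) g = RHS (f : G → ℝ) g := by
        apply Finset.prod_congr rfl
        intro χ hχ
        have hχpos : 0 < (χ g).re := (Finset.mem_filter.1 hχ).2
        have hne1 : χ ≠ χ1 := by
          intro h; rw [h] at hχpos; linarith
        have hne2 : χ ≠ χ1⁻¹ := by
          intro h; rw [h, inv_re] at hχpos; linarith
        rw [S_add_smul, S_re_eq_zero χ χ1 hne1 hne2, mul_zero, add_zero]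
      -- the negative-side product strictly increases
      have hB : LHS (f : G → ℝ) g < LHS ((f : G → ℝ) + t • v) g := by
        apply Finset.prod_lt_prod
        · intro χ hχ
          exact Real.rpow_pos_of_pos (hSpos χ) _
        · intro χ hχ
          have hc : (χ g).re < 0 := (Finset.mem_filter.1 hχ).2
          refine Real.rpow_le_rpow (le_of_lt (hSpos χ)) ?_ (by linarith)
          rw [S_add_smul]
          have := S_re_nonneg χ χ1
          nlinarith
        · refine ⟨χ1, ?_, ?_⟩
          · simp [Bs, hχ1]
          · refine Real.rpow_lt_rpow (le_of_lt (hSpos χ1)) ?_ (by linarith)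
            rw [S_add_smul]
            have := S_re_self_pos χ1
            nlinarith
      rw [hA, heq] at h2g
      linarith
    -- a sequence in the complement converging to `f`
    have hseq : Tendsto
        (fun n : ℕ => (⟨(f : G → ℝ) + (1 / ((n : ℝ) + 1)) • v, hmem _⟩ : Vs G))
        atTop (𝓝 f) := by
      rw [tendsto_subtype_rng]
      have hcont : Continuous fun t : ℝ => (f : G → ℝ) + t • v :=
        continuous_const.add (continuous_id.smul continuous_const)
      have h0 : Tendsto (fun n : ℕ => (1 / ((n : ℝ) + 1))) atTop (𝓝 0) :=
        tendsto_one_div_add_atTop_nhds_zero_nat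
      have := (hcont.tendsto 0).comp h0
      simpa [Function.comp_def] using this
    have hcl : (f : Vs G) ∈ closure ((Es G)ᶜ) := by
      refine mem_closure_of_tendsto hseq (Filter.Eventually.of_forall fun n => ?_)
      exact hout _ (by positivity)
    rw [frontier, Set.mem_diff]
    refine ⟨subset_closure ⟨hf1, hf2⟩, ?_⟩
    rw [closure_compl] at hcl
    exact hcl

end EmbAux

end EmbAux

/-- Corollary 4.2 of the paper: a `G`-embeddable mutation matrix lies on the boundary of the
set of `G`-embeddable mutation matrices (relative to the affine space `V` of symmetric
vectors of sum one) iff one of the defining inequalities holds with equality. -/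
theorem embeddable_boundary_iff
    {G : Type*} [AddCommGroup G] [Fintype G]
    (V : Set (G → ℝ)) (hV : V = {f | (∑ g, f g = 1) ∧ ∀ g, f g = f (-g)})
    (E : Set V)
    (hE : E = {f : V |
      (∀ χ : AddChar G ℂ, χ ≠ 1 → 0 < ∑ h, (χ h).re * (f : G → ℝ) h) ∧
      ∀ g : G, g ≠ 0 →
        ∏ᶠ (χ : AddChar G ℂ) (_ : (χ g).re < 0),
            (∑ h, (χ h).re * (f : G → ℝ) h) ^ (-(χ g).re) ≤
        ∏ᶠ (χ : AddChar G ℂ) (_ : 0 < (χ g).re),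
            (∑ h, (χ h).re * (f : G → ℝ) h) ^ ((χ g).re)}) :
    ∀ f ∈ E, (f ∈ frontier E ↔
      ∃ g : G, g ≠ 0 ∧
        ∏ᶠ (χ : AddChar G ℂ) (_ : 0 < (χ g).re),
            (∑ h, (χ h).re * (f : G → ℝ) h) ^ ((χ g).re) =
        ∏ᶠ (χ : AddChar G ℂ) (_ : (χ g).re < 0),
            (∑ h, (χ h).re * (f : G → ℝ) h) ^ (-(χ g).re)) := by
  subst hV
  subst hE
  exact EmbAux.aux G
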